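/- Let B be a finite set of Boolean functions such that V ⊆ [B] ⊆ M (respectively E ⊆ [B] ⊆ M), where V is the clone generated by {∨, 0, 1}, E is the clone generated by {∧, 0, 1}, and M is the clone of all monotone Boolean functions. Then there exists a propositional B-formula f(x,y) such that f represents x ∨ y (respectively x ∧ y) and each of the variables x and y occurs exactly once in f(x,y). -/

import Mathlib

/-- A Boolean function of some arity `n` (arity 0 gives the constant functions). -/
abbrev BFun : Type := Σ n : ℕ, (Fin n → Bool) → Bool

/-- A clone: a set of Boolean functions containing all projections and closed
under composition (superposition). -/
def IsClone (C : Set BFun) : Prop :=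
  (∀ (n : ℕ) (k : Fin n), (⟨n, fun b => b k⟩ : BFun) ∈ C) ∧
  (∀ f ∈ C, ∀ (m : ℕ) (g : Fin (Sigma.fst f) → ((Fin m → Bool) → Bool)),
    (∀ k, (⟨m, g k⟩ : BFun) ∈ C) →
    (⟨m, fun b => f.2 fun k => g k b⟩ : BFun) ∈ C)

/-- `cloneGen B` = `[B]`, the smallest clone containing `B`. -/
def cloneGen (B : Set BFun) : Set BFun := ⋂₀ {C | IsClone C ∧ B ⊆ C}

/-- Propositional formulas over variables `V` with arbitrary Boolean connectives. -/
inductive PForm (V : Type) : Type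
  | var : V → PForm V
  | app : (n : ℕ) → ((Fin n → Bool) → Bool) → (Fin n → PForm V) → PForm V

/-- Evaluation under an assignment `σ`: the Boolean function represented by the formula. -/
def PForm.eval {V : Type} (σ : V → Bool) : PForm V → Bool
  | PForm.var x => σ x
  | PForm.app _ f args => f fun k => PForm.eval σ (args k)

/-- All connectives occurring in the formula come from `B` (a `B`-formula). -/
def PForm.usesFuns {V : Type} (B : Set BFun) : PForm V → Prop
  | PForm.var _ => True
  | PForm.app n f args => (⟨n, f⟩ : BFun) ∈ B ∧ ∀ k, PForm.usesFuns B (args k)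

/-- Number of (syntactic) occurrences of the variable `x` in the formula. -/
def PForm.occ {V : Type} [DecidableEq V] (x : V) : PForm V → ℕ
  | PForm.var y => if y = x then 1 else 0
  | PForm.app _ _ args => ∑ k, PForm.occ x (args k)

/-- The unary Boolean negation function. -/
def notFun : BFun := ⟨1, fun b => ! b 0⟩

/-- The 0-ary constant Boolean function with value `c`. -/
def constFun (c : Bool) : BFun := ⟨0, fun _ => c⟩

/-- The binary Boolean OR function. -/
def orFun : BFun := ⟨2, fun b => b 0 || b 1⟩

/-- The binary Boolean AND function. -/
def andFun : BFun := ⟨2, fun b => b 0 && b 1⟩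

/-- The clone M of all monotone Boolean functions. -/
def monotoneFuns : Set BFun :=
  {f : BFun | ∀ a b : Fin f.1 → Bool, (∀ k, a k ≤ b k) → f.2 a ≤ f.2 b}

namespace S19

open PForm

/-! ### substitution -/

def subst {V W : Type} (s : V → PForm W) : PForm V → PForm W
  | .var v => s v
  | .app n f args => .app n f fun k => subst s (args k)

lemma eval_subst {V W : Type} (s : V → PForm W) (σ : W → Bool) :
    ∀ p : PForm V, (subst s p).eval σ = p.eval fun v => (s v).eval σ
  | .var v => rfl
  | .app n f args => by
      simp only [subst, PForm.eval]
      congr 1; funext k; exact eval_subst s σ (args k)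

lemma occ_subst_zero {V W : Type} [DecidableEq V] [DecidableEq W] (s : V → PForm W) (x : W)
    (hs : ∀ v, (s v).occ x = 0) : ∀ p : PForm V, (subst s p).occ x = 0
  | .var v => hs v
  | .app n f args => by
      simp only [subst, PForm.occ]
      exact Finset.sum_eq_zero fun k _ => occ_subst_zero s x hs (args k)

lemma occ_subst_track {V W : Type} [DecidableEq V] [DecidableEq W] (s : V → PForm W) (x : W)
    (x0 : V) (hs : ∀ v, (s v).occ x = if v = x0 then 1 else 0) :
    ∀ p : PForm V, (subst s p).occ x = p.occ x0
  | .var v => by simp [subst, hs v, PForm.occ]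
  | .app n f args => by
      simp only [subst, PForm.occ]
      exact Finset.sum_congr rfl fun k _ => occ_subst_track s x x0 hs (args k)

lemma usesFuns_subst {V W : Type} {B : Set BFun} (s : V → PForm W)
    (hs : ∀ v, (s v).usesFuns B) : ∀ p : PForm V, p.usesFuns B → (subst s p).usesFuns B
  | .var v => fun _ => hs v
  | .app n f args => fun hp => ⟨hp.1, fun k => usesFuns_subst s hs (args k) (hp.2 k)⟩

lemma eval_congr {V : Type} [DecidableEq V] (σ τ : V → Bool) :
    ∀ p : PForm V, (∀ v, p.occ v ≠ 0 → σ v = τ v) → p.eval σ = p.eval τ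
  | .var v => fun h => h v (by simp [PForm.occ])
  | .app n f args => fun h => by
      simp only [PForm.eval]
      congr 1; funext k
      refine eval_congr σ τ (args k) fun v hv => h v fun hz => hv ?_
      have := (Finset.sum_eq_zero_iff).1 hz k (Finset.mem_univ k)
      exact this

/-! ### rle : order on Bool with bottom `c` -/

def rle (c a b : Bool) : Prop := (a ^^ c) ≤ (b ^^ c)

instance (c a b : Bool) : Decidable (rle c a b) := by unfold rle; infer_instance

lemma rle_refl (c a : Bool) : rle c a a := le_refl _
lemma rle_false {a b : Bool} : rle false a b ↔ a ≤ b := by simp [rle]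
lemma rle_true {a b : Bool} : rle true a b ↔ b ≤ a := by
  cases a <;> cases b <;> simp [rle] <;> decide
lemma rle_bot (c b : Bool) : rle c c b := by cases c <;> cases b <;> first | exact le_refl _ | decide
lemma rle_eq_bot {c a : Bool} (h : rle c a c) : a = c := by
  revert h; cases c <;> cases a <;> decide
lemma rle_eq_top {c b : Bool} (h : rle c (!c) b) : b = !c := by
  revert h; cases c <;> cases b <;> decide
lemma bool_eq_or (c a : Bool) : a = c ∨ a = !c := by cases c <;> cases a <;> simp
lemma not_ne_c (c : Bool) : (!c) ≠ c := by cases c <;> simp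
lemma rle_strict {c a b : Bool} (h : rle c a b) (hne : a ≠ b) : a = c ∧ b = !c := by
  revert h hne; cases c <;> cases a <;> cases b <;> decide

lemma fmono_r {n : ℕ} {f : (Fin n → Bool) → Bool}
    (hf : (⟨n, f⟩ : BFun) ∈ monotoneFuns) (c : Bool) {a b : Fin n → Bool}
    (h : ∀ k, rle c (a k) (b k)) : rle c (f a) (f b) := by
  have hf' : ∀ x y : Fin n → Bool, (∀ k, x k ≤ y k) → f x ≤ f y := hf
  cases c
  · exact rle_false.2 (hf' a b fun k => rle_false.1 (h k))
  · exact rle_true.2 (hf' b a fun k => rle_true.1 (h k))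

lemma evalMono_r {V : Type} {B : Set BFun} (hBM : ∀ f ∈ B, f ∈ monotoneFuns) (c : Bool)
    {σ τ : V → Bool} (h : ∀ v, rle c (σ v) (τ v)) :
    ∀ p : PForm V, p.usesFuns B → rle c (p.eval σ) (p.eval τ)
  | .var v => fun _ => h v
  | .app n f args => fun hp =>
      fmono_r (hBM _ hp.1) c fun k => evalMono_r hBM c h (args k) (hp.2 k)

/-! ### chain lemma -/

lemma chain_lemma (c : Bool) {n : ℕ} (f : (Fin n → Bool) → Bool) (u w : Fin n → Bool)
    (hr : ∀ k, rle c (u k) (w k)) (hu : f u = c) (hw : f w = !c) :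
    ∃ (k : Fin n) (m : Fin n → Bool),
      (∀ j, rle c (u j) (m j)) ∧ (∀ j, rle c (m j) (w j)) ∧
      (∀ j, m j = u j ∨ m j = w j) ∧
      m k = c ∧ u k = c ∧ w k = !c ∧ f m = c ∧ f (Function.update m k (!c)) = !c := by
  set ms : ℕ → Fin n → Bool := fun i j => if (j : ℕ) < i then w j else u j with hms
  have key : ∀ N, N ≤ n → f (ms N) = !c →
      ∃ i, i + 1 ≤ N ∧ f (ms i) = c ∧ f (ms (i + 1)) = !c := by
    intro N
    induction N with
    | zero =>
        intro _ h
        have h0 : ms 0 = u := by funext j; simp [hms]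
        rw [h0, hu] at h
        exact absurd h.symm (not_ne_c c)
    | succ N ihN =>
        intro hN h
        by_cases hc : f (ms N) = c
        · exact ⟨N, le_rfl, hc, h⟩
        · obtain ⟨i, hi, h1, h2⟩ := ihN (Nat.le_of_succ_le hN)
            ((bool_eq_or c (f (ms N))).resolve_left hc)
          exact ⟨i, hi.trans (Nat.le_succ N), h1, h2⟩
  have hmsn : ms n = w := by funext j; simp [hms, j.isLt]
  obtain ⟨i, hin, h1, h2⟩ := key n le_rfl (by rw [hmsn]; exact hw)
  have hi : i < n := hin
  set k : Fin n := ⟨i, hi⟩ with hk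
  have hkk : (k : ℕ) = i := rfl
  have hmk : ms i k = u k := by simp [hms, hkk]
  have hnext : ms (i + 1) = Function.update (ms i) k (w k) := by
    funext j
    by_cases hj : j = k
    · subst hj
      simp [hms, hkk, Function.update_self]
    · have hji : (j : ℕ) ≠ i := fun h => hj (Fin.ext (h.trans hkk.symm))
      rw [Function.update_of_ne hj]
      have : ((j : ℕ) < i + 1) ↔ ((j : ℕ) < i) := by omega
      simp only [hms, this]
  have hukwk : u k = c ∧ w k = !c := by
    refine rle_strict (hr k) fun hEq => ?_
    have : ms (i + 1) = ms i := by
      rw [hnext, ← hEq, ← hmk, Function.update_eq_self]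
    rw [this, h1] at h2
    exact not_ne_c c h2.symm
  refine ⟨k, ms i, ?_, ?_, ?_, ?_, hukwk.1, hukwk.2, h1, ?_⟩
  · intro j
    by_cases hj : (j : ℕ) < i
    · simpa [hms, hj] using hr j
    · simp [hms, hj]; exact rle_refl c (u j)
  · intro j
    by_cases hj : (j : ℕ) < i
    · simp [hms, hj]; exact rle_refl c (w j)
    · simpa [hms, hj] using hr j
  · intro j
    by_cases hj : (j : ℕ) < i
    · right; simp [hms, hj]
    · left; simp [hms, hj]
  · rw [hmk]; exact hukwk.1
  · have hupd : Function.update (ms i) k (!c) = ms (i + 1) := by rw [hnext, hukwk.2]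
    rw [hupd]; exact h2

lemma sum_eq_one {n : ℕ} {g : Fin n → ℕ} (h : ∑ j, g j = 1) :
    ∃ k, g k = 1 ∧ ∀ j, j ≠ k → g j = 0 := by
  have hex : ∃ k, g k ≠ 0 := by
    by_contra hall
    push_neg at hall
    rw [Finset.sum_eq_zero fun j _ => hall j] at h
    exact one_ne_zero h.symm
  obtain ⟨k, hk⟩ := hex
  have hle : g k ≤ ∑ j, g j := Finset.single_le_sum (fun j _ => Nat.zero_le _) (Finset.mem_univ k)
  rw [h] at hle
  have hgk : g k = 1 := le_antisymm hle (Nat.one_le_iff_ne_zero.2 hk)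
  have hsum : g k + ∑ j ∈ Finset.univ.erase k, g j = 1 := by
    rw [Finset.add_sum_erase _ g (Finset.mem_univ k)]; exact h
  rw [hgk] at hsum
  have hz : ∑ j ∈ Finset.univ.erase k, g j = 0 := by omega
  refine ⟨k, hgk, fun j hj => ?_⟩
  exact (Finset.sum_eq_zero_iff).1 hz j (Finset.mem_erase.2 ⟨hj, Finset.mem_univ j⟩)

end S19

namespace S19
open PForm

section Stage
variable {B : Set BFun} (hBM : ∀ f ∈ B, f ∈ monotoneFuns) (c : Bool)
  (cst : Bool → PForm (Fin 2))
  (hcU : ∀ b, (cst b).usesFuns B)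
  (hcO : ∀ b v, (cst b).occ v = 0)
  (hcE : ∀ b σ, (cst b).eval σ = b)

include hBM hcU hcO hcE

lemma stage1 (σ0 : Fin 2 → Bool) (hσ00 : σ0 0 = c) :
    ∀ p : PForm (Fin 2), p.usesFuns B → p.eval σ0 = c →
      p.eval (Function.update σ0 0 (!c)) = !c →
      ∃ q : PForm (Fin 2), q.usesFuns B ∧ q.occ 0 = 1 ∧
        q.eval σ0 = c ∧ q.eval (Function.update σ0 0 (!c)) = !c ∧
        ∀ σ, rle c (p.eval (Function.update σ 0 c)) (q.eval σ) := by
  intro p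
  induction p with
  | var v =>
    intro _ h0 h1
    by_cases hv : v = (0 : Fin 2)
    · subst hv
      refine ⟨.var 0, trivial, by simp [PForm.occ], by simpa [PForm.eval] using hσ00,
        by simp [PForm.eval], fun σ => ?_⟩
      show rle c (Function.update σ 0 c 0) (σ 0)
      rw [Function.update_self]
      exact rle_bot c (σ 0)
    · exfalso
      have h1' : PForm.eval (Function.update σ0 0 (!c)) (.var v) = σ0 v := by
        show Function.update σ0 0 (!c) v = σ0 v
        rw [Function.update_of_ne hv]
      rw [h1'] at h1
      have h0' : σ0 v = c := h0
      rw [h0'] at h1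
      exact not_ne_c c h1.symm
  | app n f args ih =>
    intro hU h0 h1
    set u : Fin n → Bool := fun k => (args k).eval σ0 with hu_def
    set u' : Fin n → Bool := fun k => (args k).eval (Function.update σ0 0 (!c)) with hu'_def
    have hσσ' : ∀ v, rle c (σ0 v) (Function.update σ0 0 (!c) v) := by
      intro v
      by_cases hv : v = (0 : Fin 2)
      · subst hv; rw [Function.update_self, hσ00]; exact rle_bot c _
      · rw [Function.update_of_ne hv]; exact rle_refl c _
    have hru : ∀ k, rle c (u k) (u' k) := fun k =>
      evalMono_r hBM c hσσ' (args k) (hU.2 k)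
    obtain ⟨k, m, hum, hmu', hmem, hmk, huk, hu'k, hfm, hfm'⟩ :=
      chain_lemma c f u u' hru h0 h1
    obtain ⟨qk, hqkU, hqkO, hqk0, hqk1, hqk2⟩ := ih k (hU.2 k) huk hu'k
    set cj : Fin n → Bool := fun j => if m j = u j then c else !c with hcj
    set pj : Fin n → PForm (Fin 2) := fun j =>
      subst (fun v => if v = 0 then cst (cj j) else .var v) (args j) with hpj
    have hpjE : ∀ j σ, (pj j).eval σ = (args j).eval (Function.update σ 0 (cj j)) := by
      intro j σ
      rw [hpj, eval_subst]
      apply eval_congr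
      intro v _
      by_cases hv : v = (0 : Fin 2)
      · subst hv; simp [hcE, Function.update_self]
      · simp [hv, Function.update_of_ne hv, PForm.eval]
    have hpjm : ∀ j, (pj j).eval σ0 = m j := by
      intro j
      rw [hpjE]
      by_cases hj : m j = u j
      · have hcjc : cj j = c := if_pos hj
        rw [hcjc, ← hσ00, Function.update_eq_self, hj]
      · have hj' : m j = u' j := (hmem j).resolve_left hj
        have hcjc : cj j = !c := if_neg hj
        rw [hcjc, hj']
    have hpjO : ∀ j, (pj j).occ 0 = 0 := by
      intro j
      rw [hpj]
      apply occ_subst_zero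
      intro v
      by_cases hv : v = (0 : Fin 2)
      · subst hv; simp [hcO]
      · simp [hv, PForm.occ, hv]
    have hpjU : ∀ j, (pj j).usesFuns B := by
      intro j
      rw [hpj]
      apply usesFuns_subst _ _ _ (hU.2 j)
      intro v
      by_cases hv : v = (0 : Fin 2)
      · simp [hv, hcU]
      · simp [hv]; trivial
    refine ⟨.app n f (fun j => if j = k then qk else pj j), ⟨hU.1, fun j => ?_⟩, ?_, ?_, ?_, ?_⟩
    · by_cases hj : j = k <;> simp [hj, hqkU, hpjU]
    · show (∑ j, PForm.occ 0 (if j = k then qk else pj j)) = 1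
      have : ∀ j, PForm.occ 0 (if j = k then qk else pj j) = if j = k then 1 else 0 := by
        intro j; by_cases hj : j = k <;> simp [hj, hqkO, hpjO]
      rw [Finset.sum_congr rfl fun j _ => this j]
      simp
    · show f (fun j => PForm.eval σ0 (if j = k then qk else pj j)) = c
      have hvec : (fun j => PForm.eval σ0 (if j = k then qk else pj j)) = m := by
        funext j
        by_cases hj : j = k
        · subst hj; rw [if_pos rfl]; rw [hqk0, hmk]
        · simp only [if_neg hj]; exact hpjm j
      rw [hvec]; exact hfm
    · show f (fun j => PForm.eval (Function.update σ0 0 (!c)) (if j = k then qk else pj j)) = !c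
      have hvec : (fun j => PForm.eval (Function.update σ0 0 (!c)) (if j = k then qk else pj j))
          = Function.update m k (!c) := by
        funext j
        by_cases hj : j = k
        · subst hj; rw [if_pos rfl]; rw [hqk1, Function.update_self]
        · simp only [if_neg hj]; rw [Function.update_of_ne hj]
          rw [← hpjm j]
          apply eval_congr
          intro v hv
          by_cases hv0 : v = (0 : Fin 2)
          · exfalso; subst hv0; exact hv (hpjO j)
          · rw [Function.update_of_ne hv0]
      rw [hvec]; exact hfm'
    · intro σ
      show rle c (f fun j => (args j).eval (Function.update σ 0 c))
        (f fun j => PForm.eval σ (if j = k then qk else pj j))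
      apply fmono_r (hBM _ hU.1) c
      intro j
      by_cases hj : j = k
      · subst hj; rw [if_pos rfl]; exact hqk2 σ
      · simp only [if_neg hj]
        rw [hpjE]
        apply evalMono_r hBM c _ (args j) (hU.2 j)
        intro v
        by_cases hv : v = (0 : Fin 2)
        · subst hv; rw [Function.update_self, Function.update_self]; exact rle_bot c _
        · rw [Function.update_of_ne hv, Function.update_of_ne hv]; exact rle_refl c _

lemma stage2 (σ0 σ1 : Fin 2 → Bool) (hσ : ∀ v, rle c (σ0 v) (σ1 v))
    (h00 : σ0 0 = c) (h10 : σ1 0 = c) :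
    ∀ p : PForm (Fin 2), p.usesFuns B → p.occ 0 = 1 →
      p.eval σ0 = c → p.eval (Function.update σ0 0 (!c)) = !c → p.eval σ1 = !c →
      ∃ h : PForm (Fin 2), h.usesFuns B ∧ h.occ 0 = 1 ∧ h.occ 1 = 1 ∧
        h.eval ![c, c] = c ∧ h.eval ![!c, c] = !c ∧ h.eval ![c, !c] = !c := by
  intro p
  induction p with
  | var v =>
    intro _ hocc h0 h1 h2
    have hv : v = (0 : Fin 2) := by
      by_cases hv : v = (0 : Fin 2)
      · exact hv
      · exfalso; simp [PForm.occ, hv] at hocc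
    subst hv
    exfalso
    have h2' : σ1 0 = !c := h2
    rw [h10] at h2'
    exact not_ne_c c h2'.symm
  | app n f args ih =>
    intro hU hocc h0 h1 h2
    set u : Fin n → Bool := fun k => (args k).eval σ0 with hu_def
    set w : Fin n → Bool := fun k => (args k).eval σ1 with hw_def
    set u' : Fin n → Bool := fun k => (args k).eval (Function.update σ0 0 (!c)) with hu'_def
    have hσσ' : ∀ v, rle c (σ0 v) (Function.update σ0 0 (!c) v) := by
      intro v
      by_cases hv : v = (0 : Fin 2)
      · subst hv; rw [Function.update_self, h00]; exact rle_bot c _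
      · rw [Function.update_of_ne hv]; exact rle_refl c _
    have hruw : ∀ k, rle c (u k) (w k) := fun k => evalMono_r hBM c hσ (args k) (hU.2 k)
    have hruu' : ∀ k, rle c (u k) (u' k) := fun k => evalMono_r hBM c hσσ' (args k) (hU.2 k)
    obtain ⟨k0, hk0, hk0z⟩ := sum_eq_one (hocc : (∑ j, (args j).occ 0) = 1)
    have hu'j : ∀ j, j ≠ k0 → u' j = u j := by
      intro j hj
      apply eval_congr
      intro v hv
      by_cases hv0 : v = (0 : Fin 2)
      · exfalso; subst hv0; exact hv (hk0z j hj)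
      · rw [Function.update_of_ne hv0]
    have hne : u' k0 ≠ u k0 := by
      intro hEq
      have huu : u' = u := by
        funext j
        by_cases hj : j = k0
        · subst hj; exact hEq
        · exact hu'j j hj
      have h1' : f u' = !c := h1
      have h0' : f u = c := h0
      rw [huu, h0'] at h1'
      exact not_ne_c c h1'.symm
    have huk0 : u k0 = c ∧ u' k0 = !c := rle_strict (hruu' k0) (Ne.symm hne)
    obtain ⟨k, m, hum, hmw, hmem, hmk, hukc, hwk, hfm, hfm'⟩ := chain_lemma c f u w hruw h0 h2
    by_cases hkk : k = k0
    · -- the chain flip happens in the argument containing x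
      subst hkk
      obtain ⟨h', hU', hO0', hO1', e1, e2, e3⟩ :=
        ih k (hU.2 k) (hk0) hukc huk0.2 hwk
      refine ⟨.app n f (fun j => if j = k then h' else cst (m j)), ⟨hU.1, fun j => ?_⟩, ?_, ?_, ?_, ?_, ?_⟩
      · by_cases hj : j = k <;> simp [hj, hU', hcU]
      · show (∑ j, PForm.occ 0 (if j = k then h' else cst (m j))) = 1
        have : ∀ j, PForm.occ 0 (if j = k then h' else cst (m j)) = if j = k then 1 else 0 := by
          intro j; by_cases hj : j = k <;> simp [hj, hO0', hcO]
        rw [Finset.sum_congr rfl fun j _ => this j]; simp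
      · show (∑ j, PForm.occ 1 (if j = k then h' else cst (m j))) = 1
        have : ∀ j, PForm.occ 1 (if j = k then h' else cst (m j)) = if j = k then 1 else 0 := by
          intro j; by_cases hj : j = k <;> simp [hj, hO1', hcO]
        rw [Finset.sum_congr rfl fun j _ => this j]; simp
      · show f (fun j => PForm.eval ![c, c] (if j = k then h' else cst (m j))) = c
        have hvec : (fun j => PForm.eval ![c, c] (if j = k then h' else cst (m j))) = m := by
          funext j
          by_cases hj : j = k
          · subst hj; rw [if_pos rfl, e1, hmk]
          · rw [if_neg hj, hcE]
        rw [hvec]; exact hfm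
      · show f (fun j => PForm.eval ![!c, c] (if j = k then h' else cst (m j))) = !c
        have hvec : (fun j => PForm.eval ![!c, c] (if j = k then h' else cst (m j)))
            = Function.update m k (!c) := by
          funext j
          by_cases hj : j = k
          · subst hj; rw [if_pos rfl, e2, Function.update_self]
          · rw [if_neg hj, hcE, Function.update_of_ne hj]
        rw [hvec]; exact hfm'
      · show f (fun j => PForm.eval ![c, !c] (if j = k then h' else cst (m j))) = !c
        have hvec : (fun j => PForm.eval ![c, !c] (if j = k then h' else cst (m j)))
            = Function.update m k (!c) := by
          funext j
          by_cases hj : j = k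
          · subst hj; rw [if_pos rfl, e3, Function.update_self]
          · rw [if_neg hj, hcE, Function.update_of_ne hj]
        rw [hvec]; exact hfm'
    · -- the chain flip happens elsewhere
      have huk0c : u k0 = c := huk0.1
      have hfu' : f (Function.update m k0 (!c)) = !c := by
        have hle : ∀ j, rle c (u' j) (Function.update m k0 (!c) j) := by
          intro j
          by_cases hj : j = k0
          · subst hj; rw [Function.update_self, huk0.2]; exact rle_refl c _
          · rw [Function.update_of_ne hj, hu'j j hj]; exact hum j
        have hmono := fmono_r (hBM _ hU.1) c hle
        have h1' : f u' = !c := h1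
        rw [h1'] at hmono
        exact rle_eq_top hmono
      have hmk0 : m k0 = c := by
        rcases bool_eq_or c (m k0) with h | h
        · exact h
        · exfalso
          have : Function.update m k0 (!c) = m := by rw [← h, Function.update_eq_self]
          rw [this, hfm] at hfu'
          exact not_ne_c c hfu'.symm
      set A := subst (fun v => if v = 0 then .var 0 else cst (σ0 v)) (args k0) with hA
      have hAe : ∀ σ : Fin 2 → Bool, A.eval σ = (args k0).eval (Function.update σ0 0 (σ 0)) := by
        intro σ
        rw [hA, eval_subst]
        apply eval_congr
        intro v _
        by_cases hv : v = (0 : Fin 2)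
        · subst hv; simp [PForm.eval, Function.update_self]
        · simp [hv, hcE, Function.update_of_ne hv, PForm.eval]
      have hA0 : ∀ σ : Fin 2 → Bool, σ 0 = c → A.eval σ = c := by
        intro σ h
        rw [hAe, h, ← h00, Function.update_eq_self, h00]
        exact huk0c
      have hA1 : ∀ σ : Fin 2 → Bool, σ 0 = !c → A.eval σ = !c := by
        intro σ h
        rw [hAe, h]
        exact huk0.2
      have hs0 : ∀ v : Fin 2, PForm.occ 0 ((fun v => if v = 0 then PForm.var 0 else cst (σ0 v)) v)
          = if v = (0 : Fin 2) then 1 else 0 := by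
        intro v
        by_cases hv : v = (0 : Fin 2) <;> simp [hv, PForm.occ, hcO]
      have hAO0 : A.occ 0 = 1 := by
        rw [hA, occ_subst_track _ _ _ hs0]
        exact hk0
      have hAO1 : A.occ 1 = 0 := by
        rw [hA]
        apply occ_subst_zero
        intro v
        by_cases hv : v = (0 : Fin 2) <;> simp [hv, PForm.occ, hcO]
      have hAU : A.usesFuns B := by
        rw [hA]
        apply usesFuns_subst _ _ _ (hU.2 k0)
        intro v
        by_cases hv : v = (0 : Fin 2)
        · simp [hv]; trivial
        · simp [hv, hcU]
      refine ⟨.app n f (fun j => if j = k0 then A else if j = k then .var 1 else cst (m j)),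
        ⟨hU.1, fun j => ?_⟩, ?_, ?_, ?_, ?_, ?_⟩
      · show PForm.usesFuns B (if j = k0 then A else if j = k then PForm.var 1 else cst (m j))
        by_cases hj : j = k0
        · rw [if_pos hj]; exact hAU
        · rw [if_neg hj]
          by_cases hj' : j = k
          · rw [if_pos hj']; trivial
          · rw [if_neg hj']; exact hcU _
      · show (∑ j, PForm.occ 0 (if j = k0 then A else if j = k then .var 1 else cst (m j))) = 1
        have : ∀ j, PForm.occ 0 (if j = k0 then A else if j = k then .var 1 else cst (m j))
            = if j = k0 then 1 else 0 := by
          intro j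
          by_cases hj : j = k0
          · rw [if_pos hj, if_pos hj]; exact hAO0
          · rw [if_neg hj, if_neg hj]
            by_cases hj' : j = k
            · rw [if_pos hj']; simp [PForm.occ]
            · rw [if_neg hj']; exact hcO _ _
        rw [Finset.sum_congr rfl fun j _ => this j]; simp
      · show (∑ j, PForm.occ 1 (if j = k0 then A else if j = k then .var 1 else cst (m j))) = 1
        have : ∀ j, PForm.occ 1 (if j = k0 then A else if j = k then .var 1 else cst (m j))
            = if j = k then 1 else 0 := by
          intro j
          by_cases hj : j = k0
          · have hjk : j ≠ k := fun h => hkk (h.symm.trans hj)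
            rw [if_pos hj, if_neg hjk]; exact hAO1
          · rw [if_neg hj]
            by_cases hj' : j = k
            · rw [if_pos hj', if_pos hj']; simp [PForm.occ]
            · rw [if_neg hj', if_neg hj']; exact hcO _ _
        rw [Finset.sum_congr rfl fun j _ => this j]; simp
      · show f (fun j => PForm.eval ![c, c] (if j = k0 then A else if j = k then .var 1 else cst (m j))) = c
        have hvec : (fun j => PForm.eval ![c, c] (if j = k0 then A else if j = k then .var 1 else cst (m j))) = m := by
          funext j
          by_cases hj : j = k0
          · subst hj; rw [if_pos rfl, hA0 _ (by simp), hmk0]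
          · rw [if_neg hj]
            by_cases hj' : j = k
            · subst hj'; rw [if_pos rfl]
              show ((![c, c] : Fin 2 → Bool) 1) = m j
              rw [hmk]; simp
            · rw [if_neg hj', hcE]
        rw [hvec]; exact hfm
      · show f (fun j => PForm.eval ![!c, c] (if j = k0 then A else if j = k then .var 1 else cst (m j))) = !c
        have hvec : (fun j => PForm.eval ![!c, c] (if j = k0 then A else if j = k then .var 1 else cst (m j)))
            = Function.update m k0 (!c) := by
          funext j
          by_cases hj : j = k0
          · subst hj; rw [if_pos rfl, hA1 _ (by simp), Function.update_self]
          · rw [if_neg hj, Function.update_of_ne hj]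
            by_cases hj' : j = k
            · subst hj'; rw [if_pos rfl]
              show ((![!c, c] : Fin 2 → Bool) 1) = m j
              rw [hmk]; simp
            · rw [if_neg hj', hcE]
        rw [hvec]; exact hfu'
      · show f (fun j => PForm.eval ![c, !c] (if j = k0 then A else if j = k then .var 1 else cst (m j))) = !c
        have hvec : (fun j => PForm.eval ![c, !c] (if j = k0 then A else if j = k then .var 1 else cst (m j)))
            = Function.update m k (!c) := by
          funext j
          by_cases hj : j = k0
          · subst hj; rw [if_pos rfl, hA0 _ (by simp), Function.update_of_ne (fun h => hkk h.symm), hmk0]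
          · rw [if_neg hj]
            by_cases hj' : j = k
            · subst hj'; rw [if_pos rfl, Function.update_self]
              show ((![c, !c] : Fin 2 → Bool) 1) = !c
              simp
            · rw [if_neg hj', hcE, Function.update_of_ne hj']
        rw [hvec]; exact hfm'

end Stage
end S19

namespace S19
open PForm

def ReprSet (B : Set BFun) : Set BFun :=
  {f | ∃ p : PForm (Fin f.1), p.usesFuns B ∧ ∀ σ, p.eval σ = f.2 σ}

lemma isClone_reprSet (B : Set BFun) : IsClone (ReprSet B) := by
  constructor
  · intro n k
    exact ⟨.var k, trivial, fun σ => rfl⟩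
  · rintro f ⟨p, hpU, hpE⟩ m g hg
    choose q hqU hqE using hg
    refine ⟨subst q p, usesFuns_subst (W := Fin m) q hqU p hpU, fun σ => ?_⟩
    rw [eval_subst, hpE]
    show f.2 _ = f.2 _
    have : (fun v => PForm.eval σ (q v)) = (fun k => g k σ) := funext fun k => hqE k σ
    rw [this]

lemma b_subset_reprSet (B : Set BFun) : B ⊆ ReprSet B := by
  intro f hf
  exact ⟨.app f.1 f.2 (fun k => .var k), ⟨hf, fun _ => trivial⟩, fun σ => rfl⟩

lemma subset_cloneGen (B : Set BFun) : B ⊆ cloneGen B :=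
  fun f hf => Set.mem_sInter.2 fun _ hC => hC.2 hf

lemma cloneGen_subset_reprSet (B : Set BFun) : cloneGen B ⊆ ReprSet B :=
  Set.sInter_subset_of_mem ⟨isClone_reprSet B, b_subset_reprSet B⟩

end S19

namespace S19
open PForm

lemma fin2_eq (σ : Fin 2 → Bool) : σ = ![σ 0, σ 1] := by
  funext v; fin_cases v <;> rfl

lemma main_helper {B : Set BFun} (hBM : ∀ f ∈ B, f ∈ monotoneFuns) (c : Bool)
    (cst : Bool → PForm (Fin 2))
    (hcU : ∀ b, (cst b).usesFuns B)
    (hcO : ∀ b v, (cst b).occ v = 0)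
    (hcE : ∀ b σ, (cst b).eval σ = b)
    (p : PForm (Fin 2)) (hpU : p.usesFuns B)
    (e1 : p.eval ![c, c] = c) (e2 : p.eval ![!c, c] = !c) (e3 : p.eval ![c, !c] = !c) :
    ∃ h : PForm (Fin 2), h.usesFuns B ∧ h.occ 0 = 1 ∧ h.occ 1 = 1 ∧
      h.eval ![c, c] = c ∧ h.eval ![!c, c] = !c ∧ h.eval ![c, !c] = !c ∧
      h.eval ![!c, !c] = !c := by
  have hup1 : Function.update (![c, c] : Fin 2 → Bool) 0 (!c) = ![!c, c] := by
    funext v; fin_cases v <;> simp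
  have hup2 : Function.update (![c, !c] : Fin 2 → Bool) 0 c = ![c, !c] := by
    funext v; fin_cases v <;> simp
  obtain ⟨q, hqU, hqO, hq0, hq1, hq2⟩ :=
    stage1 hBM c cst hcU hcO hcE ![c, c] (by simp) p hpU e1 (by rw [hup1]; exact e2)
  have hq3 : q.eval ![c, !c] = !c := by
    have := hq2 ![c, !c]
    rw [hup2, e3] at this
    exact rle_eq_top this
  obtain ⟨h, hU, hO0, hO1, f1, f2, f3⟩ :=
    stage2 hBM c cst hcU hcO hcE ![c, c] ![c, !c]
      (by intro v
          fin_cases v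
          · show rle c c c; exact rle_refl c c
          · show rle c c (!c); exact rle_bot c (!c))
      (by simp) (by simp) q hqU hqO hq0 hq1 hq3
  refine ⟨h, hU, hO0, hO1, f1, f2, f3, ?_⟩
  have hr : ∀ v, rle c ((![c, !c] : Fin 2 → Bool) v) ((![!c, !c] : Fin 2 → Bool) v) := by
    intro v
    fin_cases v
    · show rle c c (!c); exact rle_bot c (!c)
    · show rle c (!c) (!c); exact rle_refl c (!c)
  have := evalMono_r hBM c hr h hU
  rw [f3] at this
  exact rle_eq_top this

end S19

open S19

/-- Let `B` be a finite set of Boolean functions. If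
`V = [{∨,0,1}] ⊆ [B] ⊆ M` (resp. `E = [{∧,0,1}] ⊆ [B] ⊆ M`), where M is the clone of
monotone functions, then there is a `B`-formula `f(x,y)` (variables `V = Fin 2`)
representing `x ∨ y` (resp. `x ∧ y`) in which each of `x`, `y` occurs exactly once. -/
theorem stmt19 (B : Set BFun) (hfin : B.Finite) :
    (cloneGen {orFun, constFun false, constFun true} ⊆ cloneGen B →
      cloneGen B ⊆ monotoneFuns →
      ∃ f : PForm (Fin 2), PForm.usesFuns B f ∧
        (∀ σ : Fin 2 → Bool, PForm.eval σ f = (σ 0 || σ 1)) ∧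
        PForm.occ (0 : Fin 2) f = 1 ∧ PForm.occ (1 : Fin 2) f = 1) ∧
    (cloneGen {andFun, constFun false, constFun true} ⊆ cloneGen B →
      cloneGen B ⊆ monotoneFuns →
      ∃ f : PForm (Fin 2), PForm.usesFuns B f ∧
        (∀ σ : Fin 2 → Bool, PForm.eval σ f = (σ 0 && σ 1)) ∧
        PForm.occ (0 : Fin 2) f = 1 ∧ PForm.occ (1 : Fin 2) f = 1) := by
  constructor
  · intro hV hM
    have hBM : ∀ f ∈ B, f ∈ monotoneFuns := fun f hf => hM (subset_cloneGen B hf)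
    have hcst : ∀ b : Bool, ∃ q : PForm (Fin 2), q.usesFuns B ∧ (∀ v, q.occ v = 0) ∧
        ∀ σ, q.eval σ = b := by
      intro b
      have hmem : constFun b ∈ cloneGen B := hV (subset_cloneGen _ (by
        cases b <;> simp [Set.mem_insert_iff]))
      obtain ⟨pc, h1, h2⟩ := cloneGen_subset_reprSet B hmem
      refine ⟨subst (fun v : Fin 0 => v.elim0) pc,
        usesFuns_subst _ (fun v => v.elim0) pc h1,
        fun v => occ_subst_zero _ v (fun v0 => v0.elim0) pc,
        fun σ => ?_⟩
      exact (eval_subst (V := Fin 0) _ σ pc).trans (h2 _)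
    choose cst hcU hcO hcE using hcst
    have hor : orFun ∈ cloneGen B := hV (subset_cloneGen _ (Set.mem_insert _ _))
    obtain ⟨po, hoU, hoE⟩ := cloneGen_subset_reprSet B hor
    obtain ⟨h, hU, hO0, hO1, f1, f2, f3, f4⟩ :=
      main_helper hBM false cst hcU hcO hcE po hoU
        (((hoE _).trans rfl)) (((hoE _).trans rfl)) (((hoE _).trans rfl))
    refine ⟨h, hU, ?_, hO0, hO1⟩
    intro σ
    have hσ : σ = ![σ 0, σ 1] := fin2_eq σ
    cases h0 : σ 0 <;> cases h1 : σ 1 <;> rw [h0, h1] at hσ <;> rw [hσ]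
    · simpa using f1
    · simpa using f3
    · simpa using f2
    · simpa using f4
  · intro hV hM
    have hBM : ∀ f ∈ B, f ∈ monotoneFuns := fun f hf => hM (subset_cloneGen B hf)
    have hcst : ∀ b : Bool, ∃ q : PForm (Fin 2), q.usesFuns B ∧ (∀ v, q.occ v = 0) ∧
        ∀ σ, q.eval σ = b := by
      intro b
      have hmem : constFun b ∈ cloneGen B := hV (subset_cloneGen _ (by
        cases b <;> simp [Set.mem_insert_iff]))
      obtain ⟨pc, h1, h2⟩ := cloneGen_subset_reprSet B hmem
      refine ⟨subst (fun v : Fin 0 => v.elim0) pc,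
        usesFuns_subst _ (fun v => v.elim0) pc h1,
        fun v => occ_subst_zero _ v (fun v0 => v0.elim0) pc,
        fun σ => ?_⟩
      exact (eval_subst (V := Fin 0) _ σ pc).trans (h2 _)
    choose cst hcU hcO hcE using hcst
    have hand : andFun ∈ cloneGen B := hV (subset_cloneGen _ (Set.mem_insert _ _))
    obtain ⟨pa, haU, haE⟩ := cloneGen_subset_reprSet B hand
    obtain ⟨h, hU, hO0, hO1, f1, f2, f3, f4⟩ :=
      main_helper hBM true cst hcU hcO hcE pa haU
        (((haE _).trans rfl)) (((haE _).trans rfl)) (((haE _).trans rfl))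
    refine ⟨h, hU, ?_, hO0, hO1⟩
    intro σ
    have hσ : σ = ![σ 0, σ 1] := fin2_eq σ
    cases h0 : σ 0 <;> cases h1 : σ 1 <;> rw [h0, h1] at hσ <;> rw [hσ]
    · simpa using f4
    · simpa using f2
    · simpa using f3
    · simpa using f1
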